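/- arXiv:0804.3208 — 3 statements merged into one kernel-verified Lean document; each statement's English description precedes it below -/
import Mathlib

section
/- For any arc γ = {ζ ∈ 𝕋 : |ζ - ζ'| ≤ t} with ζ' ∈ 𝕋 and 0 < t < 1, the harmonic measure ω(λ, γ, 𝔻) of γ at any point λ in the open unit disk with |λ - ζ'| = t is at least 1/6. -/
open Metric MeasureTheory Set

set_option maxHeartbeats 1000000

/-- The normalized Lebesgue (arc-length) measure on the unit circle `𝕋 ⊆ ℂ`. -/
noncomputable def circleMeasure : Measure ℂ :=
  (ENNReal.ofReal (2 * Real.pi)⁻¹) •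
    (volume.restrict (Ioc (0:ℝ) (2 * Real.pi))).map (circleMap 0 1)

/-- `ν_E(t)`, the normalized Lebesgue measure of the `t`-neighborhood
`E_t = {ζ ∈ 𝕋 : dist(ζ,E) < t}` of `E` on the circle. -/
noncomputable def nuE (E : Set ℂ) (t : ℝ) : ℝ :=
  (circleMeasure {ζ | ζ ∈ sphere (0:ℂ) 1 ∧ infDist ζ E < t}).toReal

/-- `I(α,E) = ∫₀² ν_E(s)/s^{α+1} ds`, as an extended nonnegative real. -/
noncomputable def IInt (α : ℝ) (E : Set ℂ) : ENNReal :=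
  ∫⁻ s in Ioo (0:ℝ) 2, ENNReal.ofReal (nuE E s / s ^ (α + 1))

section Helpers
open Real

lemma arctan_pos' {x : ℝ} (h : 0 < x) : 0 < Real.arctan x := by
  have := Real.arctan_strictMono h; rwa [Real.arctan_zero] at this

lemma arctan_nonpos' {x : ℝ} (h : x ≤ 0) : Real.arctan x ≤ 0 := by
  have := Real.arctan_strictMono.monotone h; rwa [Real.arctan_zero] at this

lemma ne_odd_pi_div_two {z : ℝ} (h1 : -(π/2) < z) (h2 : z < π/2) :
    ∀ k : ℤ, z ≠ (2*(k:ℝ)+1)*π/2 := by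
  intro k hk
  have hπ := Real.pi_pos
  rcases le_or_gt 0 k with h | h
  · have : (1:ℝ) ≤ 2*(k:ℝ)+1 := by
      have : (0:ℝ) ≤ (k:ℝ) := by exact_mod_cast h
      linarith
    nlinarith
  · have : (2*(k:ℝ)+1) ≤ -1 := by
      have hk1 : k ≤ -1 := by omega
      have : (k:ℝ) ≤ -1 := by exact_mod_cast hk1
      linarith
    nlinarith

lemma tan_pi_div_six' : Real.tan (π/6) = Real.sqrt 3 / 3 := by
  have h3 : Real.sqrt 3 ^ 2 = 3 := Real.sq_sqrt (by norm_num)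
  have h30 : 0 < Real.sqrt 3 := Real.sqrt_pos.mpr (by norm_num)
  rw [Real.tan_eq_sin_div_cos, Real.sin_pi_div_six, Real.cos_pi_div_six]
  rw [div_eq_div_iff (by positivity) (by norm_num)]
  nlinarith

lemma sqrt3_half_le {c s : ℝ} (hc : 0 < c) (h2 : c^2 = 1 - s^2)
    (hs0 : 0 < s) (hs : s < 1/2) : Real.sqrt 3/2 ≤ c := by
  have h3 : Real.sqrt 3 ^ 2 = 3 := Real.sq_sqrt (by norm_num)
  have h30 : 0 < Real.sqrt 3 := Real.sqrt_pos.mpr (by norm_num)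
  nlinarith [sq_nonneg (c - Real.sqrt 3/2)]

lemma key0_lemma {s c : ℝ} (hc : 0 < c) (h2 : c^2 = 1 - s^2)
    (hs0 : 0 < s) (hs : s < 1/2) : 2*s^2 ≤ Real.sqrt 3 * (2*s*c) := by
  have h30 : 0 < Real.sqrt 3 := Real.sqrt_pos.mpr (by norm_num)
  have hc34 := sqrt3_half_le hc h2 hs0 hs
  have h3 : Real.sqrt 3 ^ 2 = 3 := Real.sq_sqrt (by norm_num)
  have hsc : s ≤ Real.sqrt 3*c := by nlinarith [mul_le_mul_of_nonneg_left hc34 h30.le]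
  have h5 : 2*s*s ≤ 2*s*(Real.sqrt 3*c) := mul_le_mul_of_nonneg_left hsc (by linarith)
  nlinarith [h5]

lemma key_ineq (r s δ β : ℝ) (hr0 : 0 < r) (hr1 : r < 1)
    (hs0 : 0 < s) (hs : s < 1/2)
    (hβ0 : 0 < β) (hβπ : β < π/3) (hsβ : Real.sin (β/2) = s)
    (hδ : |δ| < π/2)
    (hcon : 1 - 2*r*Real.cos δ + r^2 = 4*s^2) :
    π/3 ≤ 2*Real.arctan ((1+r)/(1-r) * Real.tan ((β-δ)/2))
        + 2*Real.arctan ((1+r)/(1-r) * Real.tan ((β+δ)/2)) := by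
  have hπ := Real.pi_pos
  have h1r : (0:ℝ) < 1 - r := by linarith
  obtain ⟨K, hK⟩ : ∃ K, K = (1+r)/(1-r) := ⟨_, rfl⟩
  obtain ⟨p, hp⟩ : ∃ p, p = (β-δ)/2 := ⟨_, rfl⟩
  obtain ⟨q, hq⟩ : ∃ q, q = (β+δ)/2 := ⟨_, rfl⟩
  rw [← hK, ← hp, ← hq]
  have hK0 : 0 < K := by rw [hK]; positivity
  have hδ2 := abs_lt.mp hδ
  have hp2' : -(π/2) < p ∧ p < π/2 := by constructor <;> rw [hp] <;> linarith
  have hq2' : -(π/2) < q ∧ q < π/2 := by constructor <;> rw [hq] <;> linarith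
  have hcp : 0 < Real.cos p := Real.cos_pos_of_mem_Ioo ⟨hp2'.1, hp2'.2⟩
  have hcq : 0 < Real.cos q := Real.cos_pos_of_mem_Ioo ⟨hq2'.1, hq2'.2⟩
  obtain ⟨x, hx⟩ : ∃ x, x = K * Real.tan p := ⟨_, rfl⟩
  obtain ⟨y, hy⟩ : ∃ y, y = K * Real.tan q := ⟨_, rfl⟩
  rw [← hx, ← hy]
  have hpq : p + q = β := by rw [hp, hq]; ring
  have hqp : q - p = δ := by rw [hp, hq]; ring
  have hnotboth : ¬ (x ≤ 0 ∧ y ≤ 0) := by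
    rintro ⟨hx0, hy0⟩
    have hp0 : p ≤ 0 := by
      by_contra h; push_neg at h
      have h1 := Real.tan_pos_of_pos_of_lt_pi_div_two h hp2'.2
      have : 0 < x := hx ▸ mul_pos hK0 h1
      linarith
    have hq0 : q ≤ 0 := by
      by_contra h; push_neg at h
      have h1 := Real.tan_pos_of_pos_of_lt_pi_div_two h hq2'.2
      have : 0 < y := hy ▸ mul_pos hK0 h1
      linarith
    linarith
  suffices h : π/6 ≤ Real.arctan x + Real.arctan y by linarith
  have hax := Real.arctan_lt_pi_div_two x
  have hay := Real.arctan_lt_pi_div_two y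
  have hax' := Real.neg_pi_div_two_lt_arctan x
  have hay' := Real.neg_pi_div_two_lt_arctan y
  by_cases hxy : x * y < 1
  · -- trig decompositions
    have hcb : Real.cos β = Real.cos p * Real.cos q - Real.sin p * Real.sin q := by
      rw [← hpq]; exact Real.cos_add p q
    have hcd : Real.cos δ = Real.cos q * Real.cos p + Real.sin q * Real.sin p := by
      rw [← hqp]; exact Real.cos_sub q p
    have hsb : Real.sin β = Real.sin p * Real.cos q + Real.cos p * Real.sin q := by
      rw [← hpq]; exact Real.sin_add p q
    have hβ2a : 0 < β/2 := by linarith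
    have hβ2b : β/2 < π/2 := by linarith
    have hcβ2 : 0 < Real.cos (β/2) := Real.cos_pos_of_mem_Ioo ⟨by linarith, hβ2b⟩
    have hpc := Real.sin_sq_add_cos_sq (β/2)
    rw [hsβ] at hpc
    have hc2 : Real.cos (β/2)^2 = 1 - s^2 := by linarith
    have hcbval : Real.cos β = 1 - 2*s^2 := by
      have h2β : β = 2*(β/2) := by ring
      rw [h2β, Real.cos_two_mul]
      linarith
    have hsbval : Real.sin β = 2*s*Real.cos (β/2) := by
      have h2β : β = 2*(β/2) := by ring
      rw [h2β, Real.sin_two_mul, hsβ]; ring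
    have h3 : Real.sqrt 3 ^ 2 = 3 := Real.sq_sqrt (by norm_num)
    have h30 : 0 < Real.sqrt 3 := Real.sqrt_pos.mpr (by norm_num)
    have hkey0 : 2*s^2 ≤ Real.sqrt 3 * Real.sin β := by
      rw [hsbval]; exact key0_lemma hcβ2 hc2 hs0 hs
    -- main polynomial inequality
    have hK2 : K*(1-r) = 1+r := by rw [hK]; field_simp
    have hK2' : K^2*(1-r)^2 = (1+r)^2 := by rw [← mul_pow, hK2]
    have hid' : (Real.cos δ + Real.cos β)*(1-r)^2 - (1+r)^2*(Real.cos δ - Real.cos β)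
        = 4*(1-r^2)*s^2 := by
      linear_combination 2*hcon + (2+2*r^2)*hcbval
    have hfac : ((Real.cos δ + Real.cos β)/2 - K^2*((Real.cos δ - Real.cos β)/2))*(1-r)^2
        = 2*(1-r^2)*s^2 := by
      linear_combination (1/2)*hid' + (-(Real.cos δ - Real.cos β)/2)*hK2'
    have hrhs : (Real.sqrt 3*(K*Real.sin β))*(1-r)^2 = Real.sqrt 3*Real.sin β*(1-r^2) := by
      linear_combination (Real.sqrt 3*Real.sin β*(1-r))*hK2
    have hcpcq : Real.cos p * Real.cos q = (Real.cos δ + Real.cos β)/2 := by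
      rw [hcb, hcd]; ring
    have hspsq : Real.sin p * Real.sin q = (Real.cos δ - Real.cos β)/2 := by
      rw [hcb, hcd]; ring
    have hmain : 1 - x*y ≤ Real.sqrt 3 * (x + y) := by
      have e1 : (1 - x*y)*(Real.cos p * Real.cos q)
          = Real.cos p * Real.cos q - K^2*(Real.sin p * Real.sin q) := by
        rw [hx, hy, Real.tan_eq_sin_div_cos, Real.tan_eq_sin_div_cos]
        field_simp
      have e2 : (Real.sqrt 3*(x + y))*(Real.cos p * Real.cos q)
          = Real.sqrt 3*(K*Real.sin β) := by
        rw [hx, hy, Real.tan_eq_sin_div_cos, Real.tan_eq_sin_div_cos, hsb]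
        field_simp
      have hcpq : 0 < Real.cos p * Real.cos q := by positivity
      rw [← mul_le_mul_iff_of_pos_right hcpq, e1, e2]
      rw [hcpcq, hspsq]
      rw [← mul_le_mul_iff_of_pos_right (by positivity : (0:ℝ) < (1-r)^2), hfac, hrhs]
      have h1r2 : (0:ℝ) ≤ 1 - r^2 := by
        rw [show (1:ℝ) - r^2 = (1-r)*(1+r) from by ring]
        exact mul_nonneg h1r.le (by linarith)
      have hstep := mul_le_mul_of_nonneg_left hkey0 h1r2
      calc 2*(1-r^2)*s^2 = (1-r^2)*(2*s^2) := by ring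
        _ ≤ (1-r^2)*(Real.sqrt 3*Real.sin β) := hstep
        _ = Real.sqrt 3*Real.sin β*(1-r^2) := by ring
    -- conclude via tangent addition
    have hS1 : -(π/2) < Real.arctan x + Real.arctan y := by
      rcases not_and_or.mp hnotboth with h | h <;> push_neg at h
      · have := arctan_pos' h; linarith
      · have := arctan_pos' h; linarith
    have hS2 : Real.arctan x + Real.arctan y < π/2 := by
      rcases le_or_gt x 0 with h | h
      · have := arctan_nonpos' h; linarith
      · rcases le_or_gt y 0 with h' | h'
        · have := arctan_nonpos' h'; linarith
        · have hxy' : x < y⁻¹ := by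
            have h1 : x*y < y⁻¹*y := by rw [inv_mul_cancel₀ h'.ne']; linarith
            exact lt_of_mul_lt_mul_right h1 h'.le
          have h2 : Real.arctan x < Real.arctan y⁻¹ := Real.arctan_strictMono hxy'
          rw [Real.arctan_inv_of_pos h'] at h2
          linarith
    have htadd : Real.tan (Real.arctan x + Real.arctan y) = (x+y)/(1-x*y) := by
      rw [Real.tan_add (Or.inl ⟨ne_odd_pi_div_two hax' hax, ne_odd_pi_div_two hay' hay⟩),
        Real.tan_arctan, Real.tan_arctan]
    have hZ : Real.arctan x + Real.arctan y = Real.arctan ((x+y)/(1-x*y)) := by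
      rw [← htadd, Real.arctan_tan hS1 hS2]
    have h3 : Real.sqrt 3 ^ 2 = 3 := Real.sq_sqrt (by norm_num)
    have h30 : 0 < Real.sqrt 3 := Real.sqrt_pos.mpr (by norm_num)
    have h1xy : 0 < 1 - x*y := by linarith
    have hquot : Real.sqrt 3/3 ≤ (x+y)/(1-x*y) := by
      rw [le_div_iff₀ h1xy]
      have hh := mul_le_mul_of_nonneg_left hmain (by positivity : (0:ℝ) ≤ Real.sqrt 3/3)
      have e : Real.sqrt 3/3*(Real.sqrt 3*(x+y)) = x+y := by
        rw [show Real.sqrt 3/3*(Real.sqrt 3*(x+y)) = (Real.sqrt 3^2)*(x+y)/3 from by ring, h3]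
        ring
      rw [e] at hh
      linarith
    have h6 : Real.arctan (Real.sqrt 3/3) = π/6 := by
      rw [← tan_pi_div_six', Real.arctan_tan (by linarith) (by linarith)]
    calc π/6 = Real.arctan (Real.sqrt 3/3) := h6.symm
      _ ≤ Real.arctan ((x+y)/(1-x*y)) := Real.arctan_strictMono.monotone hquot
      _ = Real.arctan x + Real.arctan y := hZ.symm
  · push_neg at hxy
    have hxpos : 0 < x := by
      by_contra h; push_neg at h
      rcases not_and_or.mp hnotboth with h' | h' <;> push_neg at h'
      · linarith
      · have : x*y ≤ 0 := mul_nonpos_of_nonpos_of_nonneg h h'.le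
        linarith
    have hypos : 0 < y := by
      by_contra h; push_neg at h
      have : x*y ≤ 0 := mul_nonpos_of_nonneg_of_nonpos hxpos.le h
      linarith
    have hinvle : y⁻¹ ≤ x := by
      have h1 : y⁻¹ * y ≤ x * y := by rw [inv_mul_cancel₀ hypos.ne']; linarith
      exact le_of_mul_le_mul_right h1 hypos
    have h2 : Real.arctan y⁻¹ ≤ Real.arctan x := Real.arctan_strictMono.monotone hinvle
    rw [Real.arctan_inv_of_pos hypos] at h2
    have h4 : 0 < Real.arctan y := arctan_pos' hypos
    linarith


lemma normSq_exp_sub (r₁ r₂ a b : ℝ) :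
    Complex.normSq ((r₁:ℂ) * Complex.exp (a*Complex.I) - (r₂:ℂ) * Complex.exp (b*Complex.I))
      = r₁^2 - 2*r₁*r₂*Real.cos (a-b) + r₂^2 := by
  simp only [Complex.normSq_apply, Complex.sub_re, Complex.sub_im, Complex.mul_re,
    Complex.mul_im, Complex.ofReal_re, Complex.ofReal_im,
    Complex.exp_ofReal_mul_I_re, Complex.exp_ofReal_mul_I_im]
  have hca := Real.cos_sub a b
  have ha := Real.sin_sq_add_cos_sq a
  have hb := Real.sin_sq_add_cos_sq b
  linear_combination r₁^2*ha + r₂^2*hb + 2*r₁*r₂*hca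

lemma poisson_hasDerivAt (r ψ K : ℝ) (hr0 : 0 < r) (hr1 : r < 1)
    (hK : K = (1+r)/(1-r)) (θ : ℝ) (hcos : Real.cos ((θ-ψ)/2) ≠ 0) :
    HasDerivAt (fun θ => 2*Real.arctan (K * Real.tan ((θ-ψ)/2)))
      ((1-r^2)/(1-2*r*Real.cos (θ-ψ)+r^2)) θ := by
  have h1r : (0:ℝ) < 1 - r := by linarith
  have h1 : HasDerivAt (fun x : ℝ => (x-ψ)/2) (1/2) θ := by
    simpa using ((hasDerivAt_id θ).sub_const ψ).div_const 2
  have h2 : HasDerivAt Real.tan (1/Real.cos ((θ-ψ)/2)^2) ((θ-ψ)/2) :=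
    Real.hasDerivAt_tan hcos
  have h3 : HasDerivAt (fun x : ℝ => Real.tan ((x-ψ)/2))
      (1/Real.cos ((θ-ψ)/2)^2 * (1/2)) θ := by have := h2.comp θ h1; exact this
  have h4 := h3.const_mul K
  have h5 := (Real.hasDerivAt_arctan (K * Real.tan ((θ-ψ)/2))).comp θ h4
  have h6 := h5.const_mul (2:ℝ)
  refine h6.congr_deriv (Eq.symm ?_)
  -- derivative value identity
  set u := (θ-ψ)/2 with hu
  have h2u : θ - ψ = 2*u := by rw [hu]; ring
  have hD : 1-2*r*Real.cos (θ-ψ)+r^2 = (1+r)^2 - 4*r*Real.cos u^2 := by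
    rw [h2u, Real.cos_two_mul]; ring
  have hDpos : 0 < 1-2*r*Real.cos (θ-ψ)+r^2 := by
    have := Real.cos_le_one (θ-ψ)
    nlinarith [sq_nonneg (1-r)]
  have htan : Real.tan u = Real.sin u / Real.cos u := Real.tan_eq_sin_div_cos u
  have hsc := Real.sin_sq_add_cos_sq u
  have h1K : 1 + (K*Real.tan u)^2 = (Real.cos u^2 + K^2*Real.sin u^2)/Real.cos u^2 := by
    rw [htan]; field_simp
  have hQ : 0 < Real.cos u^2 + K^2*Real.sin u^2 := by
    have hK0 : 0 < K := by rw [hK]; positivity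
    have h1 : 0 < Real.cos u^2 := by positivity
    nlinarith [sq_nonneg (K*Real.sin u)]
  rw [h1K]
  have e1 : 2 * (1 / ((Real.cos u ^ 2 + K ^ 2 * Real.sin u ^ 2) / Real.cos u ^ 2)
      * (K * (1 / Real.cos u ^ 2 * (1 / 2)))) = K / (Real.cos u^2 + K^2*Real.sin u^2) := by
    field_simp
  rw [e1, div_eq_div_iff hDpos.ne' hQ.ne', hD, hK,
    show Real.sin u^2 = 1 - Real.cos u^2 from by linarith [hsc]]
  field_simp
  ring

end Helpers

/-- For an arc `γ = {ζ ∈ 𝕋 : |ζ - ζ'| ≤ t}` with `ζ' ∈ 𝕋`, `0 < t < 1`, the harmonic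
measure `ω(λ,γ,𝔻)` (Poisson integral of the indicator of `γ`) at any `λ ∈ 𝔻` with
`|λ - ζ'| = t` is at least `1/6`. -/
theorem harmonic_measure_arc_ge (ζ' : ℂ) (hζ' : ζ' ∈ sphere (0:ℂ) 1)
    (t : ℝ) (ht0 : 0 < t) (ht1 : t < 1)
    (lam : ℂ) (hlam : lam ∈ ball (0:ℂ) 1) (hlamt : ‖lam - ζ'‖ = t) :
    (1:ℝ)/6 ≤ ∫ ζ in {ζ | ζ ∈ sphere (0:ℂ) 1 ∧ ‖ζ - ζ'‖ ≤ t},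
        (1 - ‖lam‖^2) / ‖ζ - lam‖^2 ∂circleMeasure := by
  have hπ := Real.pi_pos
  -- basic data
  have hζ'1 : ‖ζ'‖ = 1 := by
    have := mem_sphere.mp hζ'
    simpa [Complex.dist_eq] using this
  have hr1 : ‖lam‖ < 1 := by
    have := mem_ball.mp hlam
    simpa [Complex.dist_eq] using this
  have hlam0 : lam ≠ 0 := by
    intro h
    rw [h, zero_sub, norm_neg] at hlamt
    rw [hζ'1] at hlamt
    linarith
  have hr0 : 0 < ‖lam‖ := norm_pos_iff.mpr hlam0
  obtain ⟨r, hr⟩ : ∃ r, r = ‖lam‖ := ⟨_, rfl⟩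
  obtain ⟨φ, hφ⟩ : ∃ φ, φ = Complex.arg ζ' := ⟨_, rfl⟩
  obtain ⟨δ, hδ⟩ : ∃ δ, δ = Complex.arg (lam * (starRingEnd ℂ) ζ') := ⟨_, rfl⟩
  obtain ⟨ψ, hψ⟩ : ∃ ψ, ψ = φ + δ := ⟨_, rfl⟩
  rw [← hr] at hr0 hr1
  -- exponential representations
  have hζ'exp : ζ' = Complex.exp (φ*Complex.I) := by
    conv_lhs => rw [← Complex.norm_mul_exp_arg_mul_I ζ']
    rw [hζ'1, ← hφ, Complex.ofReal_one, one_mul]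
  have habsw : ‖lam * (starRingEnd ℂ) ζ'‖ = r := by
    rw [norm_mul, Complex.norm_conj, hζ'1, mul_one, hr]
  have hlamexp : lam = (r:ℂ) * Complex.exp (ψ*Complex.I) := by
    have hconj : (starRingEnd ℂ) ζ' * ζ' = 1 := by
      rw [mul_comm, Complex.mul_conj]
      rw [Complex.normSq_eq_norm_sq, hζ'1]
      norm_num
    have h1 : lam * (starRingEnd ℂ) ζ' = (r:ℂ) * Complex.exp (δ*Complex.I) := by
      conv_lhs => rw [← Complex.norm_mul_exp_arg_mul_I (lam * (starRingEnd ℂ) ζ')]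
      rw [habsw, ← hδ]
    calc lam = lam * ((starRingEnd ℂ) ζ' * ζ') := by rw [hconj, mul_one]
      _ = (lam * (starRingEnd ℂ) ζ') * ζ' := by ring
      _ = (r:ℂ) * Complex.exp (δ*Complex.I) * Complex.exp (φ*Complex.I) := by
          rw [h1, ← hζ'exp]
      _ = (r:ℂ) * Complex.exp (ψ*Complex.I) := by
          rw [mul_assoc, ← Complex.exp_add, hψ]
          congr 2
          push_cast
          ring
  -- the constraint
  have hcon : 1 - 2*r*Real.cos δ + r^2 = t^2 := by
    have h1 : Complex.normSq (lam - ζ') = t^2 := by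
      rw [← Complex.sq_norm, hlamt]
    rw [hlamexp, hζ'exp] at h1
    have h2 := normSq_exp_sub r 1 ψ φ
    rw [show ((1:ℝ):ℂ) = (1:ℂ) from by norm_num, one_mul] at h2
    rw [h2] at h1
    have h3 : ψ - φ = δ := by rw [hψ]; ring
    rw [h3] at h1
    linarith
  -- β and s
  obtain ⟨β, hβ⟩ : ∃ β, β = 2*Real.arcsin (t/2) := ⟨_, rfl⟩
  have harc0 : 0 < Real.arcsin (t/2) := Real.arcsin_pos.mpr (by linarith)
  have hsβ : Real.sin (β/2) = t/2 := by
    rw [hβ, show 2*Real.arcsin (t/2)/2 = Real.arcsin (t/2) from by ring]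
    exact Real.sin_arcsin (by linarith) (by linarith)
  have harc6 : Real.arcsin (t/2) < Real.pi/6 := by
    by_contra h
    push_neg at h
    have h1 : Real.sin (Real.pi/6) ≤ Real.sin (Real.arcsin (t/2)) :=
      Real.sin_le_sin_of_le_of_le_pi_div_two (by linarith) (Real.arcsin_le_pi_div_two _) h
    rw [Real.sin_pi_div_six, Real.sin_arcsin (by linarith) (by linarith)] at h1
    linarith
  have hβ0 : 0 < β := by rw [hβ]; linarith
  have hβπ3 : β < Real.pi/3 := by rw [hβ]; linarith
  -- |δ| < π/2
  have hcosδ : 0 < Real.cos δ := by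
    by_contra h
    push_neg at h
    have h1 : 2*r*Real.cos δ ≤ 0 := mul_nonpos_of_nonneg_of_nonpos (by positivity) h
    nlinarith [sq_nonneg r]
  have hδabs : |δ| < Real.pi/2 := by
    have hub := Complex.arg_le_pi (lam * (starRingEnd ℂ) ζ')
    have hlb := Complex.neg_pi_lt_arg (lam * (starRingEnd ℂ) ζ')
    rw [← hδ] at hub hlb
    rw [abs_lt]
    constructor
    · by_contra h
      push_neg at h
      have h2 : Real.cos (-δ) ≤ 0 :=
        Real.cos_nonpos_of_pi_div_two_le_of_le (by linarith) (by linarith)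
      rw [Real.cos_neg] at h2
      linarith
    · by_contra h
      push_neg at h
      have h2 : Real.cos δ ≤ 0 :=
        Real.cos_nonpos_of_pi_div_two_le_of_le h (by linarith)
      linarith
  -- set and function
  obtain ⟨S, hS⟩ : ∃ S, S = {ζ : ℂ | ζ ∈ sphere (0:ℂ) 1 ∧ ‖ζ - ζ'‖ ≤ t} := ⟨_, rfl⟩
  obtain ⟨f, hf⟩ : ∃ f, f = fun ζ : ℂ => (1 - ‖lam‖^2) / ‖ζ - lam‖^2 :=
    ⟨_, rfl⟩
  rw [show {ζ : ℂ | ζ ∈ sphere (0:ℂ) 1 ∧ ‖ζ - ζ'‖ ≤ t} = S from hS.symm]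
  rw [show (fun ζ : ℂ => (1 - ‖lam‖^2) / ‖ζ - lam‖^2) = f from hf.symm]
  have hSmeas : MeasurableSet S := by
    rw [hS]
    have h1 : {ζ : ℂ | ζ ∈ sphere (0:ℂ) 1 ∧ ‖ζ - ζ'‖ ≤ t}
        = sphere (0:ℂ) 1 ∩ {ζ : ℂ | ‖ζ - ζ'‖ ≤ t} := rfl
    rw [h1]
    exact (isClosed_sphere.inter (isClosed_le
      (continuous_norm.comp (continuous_id.sub continuous_const)) continuous_const)).measurableSet
  have hfmeas : Measurable f := by
    rw [hf]
    exact measurable_const.div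
      (((continuous_norm.comp (continuous_id.sub continuous_const)).pow 2).measurable)
  have h1rpos : (0:ℝ) < 1 - r := by linarith
  have h1r2 : (0:ℝ) ≤ 1 - r^2 := by
    rw [show (1:ℝ)-r^2 = (1-r)*(1+r) from by ring]
    exact mul_nonneg (by linarith) (by linarith)
  have hfnonneg : ∀ ζ, 0 ≤ f ζ := by
    intro ζ
    rw [hf]
    apply div_nonneg _ (sq_nonneg _)
    rw [← hr]
    exact h1r2
  -- step 1 : reduce to interval integral
  have e0 : ∫ ζ in S, f ζ ∂circleMeasure
      = (2*Real.pi)⁻¹ * ∫ θ in Ioc (0:ℝ) (2*Real.pi), S.indicator f (circleMap 0 1 θ) := by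
    rw [circleMeasure, Measure.restrict_smul, integral_smul_measure,
      ENNReal.toReal_ofReal (by positivity), smul_eq_mul]
    congr 1
    rw [← integral_indicator hSmeas,
      integral_map (measurable_circleMap 0 1).aemeasurable
        ((hfmeas.indicator hSmeas).aestronglyMeasurable)]
  -- step 2 : periodic shift
  have hGper : Function.Periodic (fun θ => S.indicator f (circleMap 0 1 θ)) (2*Real.pi) := by
    intro θ
    simp [(periodic_circleMap 0 1) θ]
  have e2 : ∫ θ in Ioc (0:ℝ) (2*Real.pi), S.indicator f (circleMap 0 1 θ)
      = ∫ θ in Ioc (φ-Real.pi) (φ+Real.pi), S.indicator f (circleMap 0 1 θ) := by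
    rw [← intervalIntegral.integral_of_le (by linarith),
      ← intervalIntegral.integral_of_le (show φ-Real.pi ≤ φ+Real.pi by linarith)]
    have h := hGper.intervalIntegral_add_eq 0 (φ-Real.pi)
    rw [zero_add] at h
    rw [h, show φ-Real.pi+2*Real.pi = φ+Real.pi from by ring]
  -- bound and integrability
  have hbound : ∀ θ, S.indicator f (circleMap 0 1 θ) ≤ (1-r^2)/(1-r)^2 := by
    intro θ
    have hM : 0 ≤ (1-r^2)/(1-r)^2 := div_nonneg h1r2 (sq_nonneg _)
    by_cases hmem : circleMap 0 1 θ ∈ S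
    · rw [Set.indicator_of_mem hmem]
      have habs1 : ‖circleMap 0 1 θ‖ = 1 := by
        simp [circleMap]
      have hge : 1 - r ≤ ‖circleMap 0 1 θ - lam‖ := by
        have h1 := norm_sub_norm_le (circleMap 0 1 θ) lam
        rw [habs1, ← hr] at h1
        exact h1
      rw [hf]
      rw [← hr]
      exact div_le_div_of_nonneg_left h1r2 (pow_pos h1rpos 2) (pow_le_pow_left₀ h1rpos.le hge 2)
    · rw [Set.indicator_of_notMem hmem]
      exact hM
  have hGnonneg : ∀ θ, 0 ≤ S.indicator f (circleMap 0 1 θ) := by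
    intro θ
    exact Set.indicator_nonneg (fun x _ => hfnonneg x) _
  have hInt : IntegrableOn (fun θ => S.indicator f (circleMap 0 1 θ))
      (Ioc (φ-Real.pi) (φ+Real.pi)) volume := by
    apply Measure.integrableOn_of_bounded measure_Ioc_lt_top.ne
      ((hfmeas.indicator hSmeas).comp (measurable_circleMap 0 1)).aestronglyMeasurable
    · exact ae_of_all _ (fun θ => by
        simp only [Function.comp_apply, Real.norm_eq_abs]
        rw [abs_of_nonneg (hGnonneg θ)]
        exact hbound θ)
  -- step 3 : restrict to the arc
  have e3 : ∫ θ in Ioc (φ-β) (φ+β), S.indicator f (circleMap 0 1 θ)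
      ≤ ∫ θ in Ioc (φ-Real.pi) (φ+Real.pi), S.indicator f (circleMap 0 1 θ) := by
    apply setIntegral_mono_set hInt (ae_of_all _ (fun θ => hGnonneg θ))
    exact HasSubset.Subset.eventuallyLE (Set.Ioc_subset_Ioc (by linarith) (by linarith))
  -- membership of arc points in S
  have hmemS : ∀ θ ∈ Ioc (φ-β) (φ+β), circleMap 0 1 θ ∈ S := by
    intro θ hθ
    rw [hS]
    constructor
    · simp [circleMap, Complex.dist_eq]
    · have hθ1 : |θ - φ| ≤ β := by
        rw [abs_le]; exact ⟨by linarith [hθ.1], by linarith [hθ.2]⟩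
    
      have hexp : circleMap 0 1 θ = Complex.exp (θ*Complex.I) := by
        simp [circleMap]
      have hnormSq : Complex.normSq (circleMap 0 1 θ - ζ') = 1 - 2*Real.cos (θ-φ) + 1 := by
        rw [hexp, hζ'exp]
        have h2 := normSq_exp_sub 1 1 θ φ
        rw [show ((1:ℝ):ℂ) = (1:ℂ) from by norm_num, one_mul, one_mul] at h2
        rw [h2]; ring
      have hhalf := Real.sin_sq_add_cos_sq ((θ-φ)/2)
      have hcosval : Real.cos (θ-φ) = 1 - 2*Real.sin ((θ-φ)/2)^2 := by
        conv_lhs => rw [show θ-φ = 2*((θ-φ)/2) from by ring, Real.cos_two_mul]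
        linear_combination 2*hhalf
      have h4 : 1 - 2*Real.cos (θ-φ) + 1 = 4 * Real.sin ((θ-φ)/2)^2 := by
        rw [hcosval]; ring
      -- |sin((θ-φ)/2)| ≤ sin(β/2) = t/2
      have habs2 : |(θ-φ)/2| ≤ β/2 := by
        rw [abs_div, abs_two]
        linarith
      have hsineq : |Real.sin ((θ-φ)/2)| ≤ t/2 := by
        have hsa : |Real.sin ((θ-φ)/2)| = Real.sin |(θ-φ)/2| := by
          rcases le_or_gt 0 ((θ-φ)/2) with h | h
          · rw [abs_of_nonneg h, abs_of_nonneg]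
            apply Real.sin_nonneg_of_nonneg_of_le_pi h
            cases' abs_le.mp habs2 with _ hu
            linarith
          · rw [abs_of_neg h, abs_of_nonpos, Real.sin_neg]
            apply Real.sin_nonpos_of_nonpos_of_neg_pi_le h.le
            cases' abs_le.mp habs2 with hl _
            linarith
        rw [hsa, ← hsβ]
        apply Real.sin_le_sin_of_le_of_le_pi_div_two
          (le_trans (by linarith) (abs_nonneg ((θ-φ)/2))) (by linarith)
        cases' abs_le.mp habs2 with _ hu
        linarith
      have h5 : Real.sin ((θ-φ)/2)^2 ≤ (t/2)^2 := by
        rw [← sq_abs]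
        exact pow_le_pow_left₀ (abs_nonneg _) hsineq 2
      have h6 : ‖circleMap 0 1 θ - ζ'‖^2 ≤ t^2 := by
        rw [Complex.sq_norm, hnormSq, h4]
        linarith [h5]
      by_contra hcon2
      push_neg at hcon2
      have h7 : t^2 < ‖circleMap 0 1 θ - ζ'‖^2 := by
        have := mul_self_lt_mul_self ht0.le hcon2
        simpa [pow_two] using this
      linarith
    -- Poisson kernel on the arc
  have hdenpos : ∀ θ : ℝ, 0 < 1-2*r*Real.cos (θ-ψ)+r^2 := by
    intro θ
    have h1 := Real.cos_le_one (θ-ψ)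
    have h2 : 2*r*Real.cos (θ-ψ) ≤ 2*r := by
      have h3 := mul_le_mul_of_nonneg_left h1 (by linarith : (0:ℝ) ≤ 2*r)
      linarith [h3]
    have h4 : (0:ℝ) < (1-r)^2 := pow_pos h1rpos 2
    nlinarith [h2, h4]
  have hfP : ∀ θ : ℝ, f (circleMap 0 1 θ) = (1-r^2)/(1-2*r*Real.cos (θ-ψ)+r^2) := by
    intro θ
    have hexp : circleMap 0 1 θ = Complex.exp ((θ:ℂ)*Complex.I) := by simp [circleMap]
    have hd : ‖circleMap 0 1 θ - lam‖^2 = 1-2*r*Real.cos (θ-ψ)+r^2 := by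
      rw [Complex.sq_norm, hexp, hlamexp]
      have h2 := normSq_exp_sub 1 r θ ψ
      rw [show ((1:ℝ):ℂ) = (1:ℂ) from by norm_num, one_mul] at h2
      rw [h2]; ring
    rw [hf]
    simp only
    rw [hd, ← hr]
  have e4 : ∫ θ in Ioc (φ-β) (φ+β), S.indicator f (circleMap 0 1 θ)
      = ∫ θ in Ioc (φ-β) (φ+β), (1-r^2)/(1-2*r*Real.cos (θ-ψ)+r^2) := by
    apply setIntegral_congr_fun measurableSet_Ioc
    intro θ hθ
    show S.indicator f (circleMap 0 1 θ) = (1-r^2)/(1-2*r*Real.cos (θ-ψ)+r^2)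
    rw [Set.indicator_of_mem (hmemS θ hθ)]
    exact hfP θ
  have hPcont : Continuous (fun θ : ℝ => (1-r^2)/(1-2*r*Real.cos (θ-ψ)+r^2)) := by
    apply continuous_const.div
    · exact (continuous_const.sub (continuous_const.mul
        (Real.continuous_cos.comp (continuous_id.sub continuous_const)))).add continuous_const
    · exact fun θ => (hdenpos θ).ne'
  have hcosne : ∀ θ ∈ Set.uIcc (φ-β) (φ+β), Real.cos ((θ-ψ)/2) ≠ 0 := by
    intro θ hθ
    rw [Set.uIcc_of_le (by linarith : φ-β ≤ φ+β)] at hθ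
    have hd2 := abs_lt.mp hδabs
    have hψ' : θ - ψ = (θ-φ) - δ := by rw [hψ]; ring
    apply ne_of_gt
    apply Real.cos_pos_of_mem_Ioo
    constructor
    · rw [hψ']
      have := hθ.1
      linarith
    · rw [hψ']
      have := hθ.2
      linarith
  have e5 : ∫ θ in Ioc (φ-β) (φ+β), (1-r^2)/(1-2*r*Real.cos (θ-ψ)+r^2)
      = 2*Real.arctan ((1+r)/(1-r) * Real.tan ((β-δ)/2))
        + 2*Real.arctan ((1+r)/(1-r) * Real.tan ((β+δ)/2)) := by
    rw [← intervalIntegral.integral_of_le (by linarith : φ-β ≤ φ+β)]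
    have hftc := intervalIntegral.integral_eq_sub_of_hasDerivAt
      (f := fun θ => 2*Real.arctan ((1+r)/(1-r) * Real.tan ((θ-ψ)/2)))
      (f' := fun θ : ℝ => (1-r^2)/(1-2*r*Real.cos (θ-ψ)+r^2))
      (fun θ hθ => poisson_hasDerivAt r ψ _ hr0 hr1 rfl θ (hcosne θ hθ))
      (hPcont.intervalIntegrable _ _)
    rw [hftc]
    have h1 : (φ+β-ψ)/2 = (β-δ)/2 := by rw [hψ]; ring
    have h2 : (φ-β-ψ)/2 = -((β+δ)/2) := by rw [hψ]; ring
    show 2*Real.arctan ((1+r)/(1-r) * Real.tan ((φ+β-ψ)/2))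
        - 2*Real.arctan ((1+r)/(1-r) * Real.tan ((φ-β-ψ)/2)) = _
    rw [h1, h2, Real.tan_neg, mul_neg, Real.arctan_neg]
    ring
  have hkey := key_ineq r (t/2) δ β hr0 hr1 (by linarith) (by linarith) hβ0 hβπ3
    hsβ hδabs (by linear_combination hcon)
  calc (1:ℝ)/6 = (2*Real.pi)⁻¹ * (Real.pi/3) := by
        field_simp
        ring
    _ ≤ (2*Real.pi)⁻¹ * ∫ θ in Ioc (0:ℝ) (2*Real.pi), S.indicator f (circleMap 0 1 θ) := by
        apply mul_le_mul_of_nonneg_left _ (by positivity)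
        calc Real.pi/3
            ≤ 2*Real.arctan ((1+r)/(1-r) * Real.tan ((β-δ)/2))
              + 2*Real.arctan ((1+r)/(1-r) * Real.tan ((β+δ)/2)) := hkey
          _ = ∫ θ in Ioc (φ-β) (φ+β), (1-r^2)/(1-2*r*Real.cos (θ-ψ)+r^2) := e5.symm
          _ = ∫ θ in Ioc (φ-β) (φ+β), S.indicator f (circleMap 0 1 θ) := e4.symm
          _ ≤ ∫ θ in Ioc (φ-Real.pi) (φ+Real.pi), S.indicator f (circleMap 0 1 θ) := e3
          _ = ∫ θ in Ioc (0:ℝ) (2*Real.pi), S.indicator f (circleMap 0 1 θ) := e2.symm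
    _ = ∫ ζ in S, f ζ ∂circleMeasure := e0.symm
end

section
/- The entire-disk canonical product f(z) = ∏_{n≥1} P((1-z_n²)/(1-z_n z)) with P(z) = (1-z)e^z and z_n = 1 - 1/(n+1) converges locally uniformly on 𝔻 and satisfies log|f(z)| ≤ 96/|1-z| for all z ∈ 𝔻. -/
open Metric Filter

noncomputable def Complex.abs : AbsoluteValue ℂ ℝ :=
  IsAbsoluteValue.toAbsoluteValue (norm : ℂ → ℝ)

theorem Complex.norm_eq_abs (z : ℂ) : ‖z‖ = Complex.abs z := rfl

theorem Complex.abs_exp (z : ℂ) : Complex.abs (Complex.exp z) = Real.exp z.re :=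
  Complex.norm_exp z

theorem Complex.normSq_eq_abs (z : ℂ) : Complex.normSq z = Complex.abs z ^ 2 :=
  Complex.normSq_eq_norm_sq z

theorem Complex.abs_ofReal (r : ℝ) : Complex.abs (r : ℂ) = |r| := by
  show ‖(r : ℂ)‖ = |r|
  simp

theorem Complex.continuous_abs : Continuous Complex.abs := continuous_norm

theorem Complex.abs_exp_sub_one_sub_id_le {x : ℂ} (hx : Complex.abs x ≤ 1) :
    Complex.abs (Complex.exp x - 1 - x) ≤ Complex.abs x ^ 2 :=
  Complex.norm_exp_sub_one_sub_id_le hx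

section CPGaux
open Finset Complex Topology
noncomputable section
namespace CPG

/-- real sequence `aa n = 1/(n+1)` -/
def aa (n : ℕ) : ℝ := 1/(n+1)

def w (n : ℕ) (z : ℂ) : ℂ := (1 - ((1:ℂ) - 1/(n+1))^2) / (1 - ((1:ℂ) - 1/(n+1)) * z)

def g (n : ℕ) (z : ℂ) : ℂ := (1 - w n z) * Complex.exp (w n z)

def F (N : ℕ) (z : ℂ) : ℂ := ∏ n ∈ Finset.Icc 1 N, g n z

lemma aa_pos (n : ℕ) : 0 < aa n := by unfold aa; positivity

lemma aa_le_one (n : ℕ) : aa n ≤ 1 := by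
  unfold aa
  rw [div_le_one (by positivity)]
  linarith [Nat.cast_nonneg (α := ℝ) n]

lemma zn_eq (n : ℕ) : (1:ℂ) - 1/(n+1) = ((1 - aa n : ℝ) : ℂ) := by
  push_cast [aa]; ring

/-- Key global estimate `|(1-u)e^u| ≤ exp(|u|²/2)`. -/
lemma absP (u : ℂ) : Complex.abs ((1 - u) * Complex.exp u) ≤ Real.exp (Complex.abs u ^ 2 / 2) := by
  rw [map_mul, Complex.abs_exp]
  have h1 : Complex.abs (1 - u) ^ 2 = 1 - 2*u.re + Complex.abs u ^ 2 := by
    rw [← Complex.normSq_eq_abs, ← Complex.normSq_eq_abs]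
    simp only [Complex.normSq_apply, Complex.sub_re, Complex.sub_im, Complex.one_re,
      Complex.one_im]
    ring
  have h2 : Complex.abs (1 - u) ≤ Real.exp ((Complex.abs u ^ 2 - 2*u.re)/2) := by
    rcases eq_or_lt_of_le (Complex.abs.nonneg (1-u)) with h|h
    · rw [← h]; positivity
    · have hl := Real.log_le_sub_one_of_pos (x := Complex.abs (1-u)^2) (by positivity)
      rw [Real.log_pow, h1] at hl
      have hl2 : Real.log (Complex.abs (1-u)) ≤ (Complex.abs u ^ 2 - 2*u.re)/2 := by
        push_cast at hl; linarith
      calc Complex.abs (1-u) = Real.exp (Real.log (Complex.abs (1-u))) := (Real.exp_log h).symm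
        _ ≤ _ := Real.exp_le_exp.2 hl2
  calc Complex.abs (1-u) * Real.exp u.re
      ≤ Real.exp ((Complex.abs u ^ 2 - 2*u.re)/2) * Real.exp u.re := by
        exact mul_le_mul_of_nonneg_right h2 (Real.exp_nonneg _)
    _ = Real.exp (Complex.abs u ^ 2 / 2) := by rw [← Real.exp_add]; ring_nf

/-- `|(1-u)e^u - 1| ≤ 3|u|²` for `|u| ≤ 1`. -/
lemma absPsub (u : ℂ) (hu : Complex.abs u ≤ 1) :
    Complex.abs ((1 - u) * Complex.exp u - 1) ≤ 3 * Complex.abs u ^ 2 := by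
  have key : (1 - u) * Complex.exp u - 1 = (1 - u) * (Complex.exp u - 1 - u) - u^2 := by ring
  have ha : Complex.abs (1 - u) ≤ 2 := by
    have := Complex.abs.sub_le_add 1 u
    rw [map_one] at this
    linarith
  have hb := Complex.abs_exp_sub_one_sub_id_le hu
  have h1 : Complex.abs ((1-u) * (Complex.exp u - 1 - u)) ≤ 2 * Complex.abs u ^ 2 := by
    rw [map_mul]
    exact mul_le_mul ha hb (Complex.abs.nonneg _) (by norm_num)
  have h2 : Complex.abs ((1-u) * (Complex.exp u - 1 - u) - u^2)
      ≤ Complex.abs ((1-u) * (Complex.exp u - 1 - u)) + Complex.abs (u^2) :=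
    Complex.abs.sub_le_add _ _
  have h3 : Complex.abs (u^2) = Complex.abs u ^ 2 := map_pow _ _ _
  rw [key]
  linarith

lemma abs_zn (n : ℕ) : Complex.abs ((1:ℂ) - 1/(n+1)) = 1 - aa n := by
  rw [zn_eq, Complex.abs_ofReal, _root_.abs_of_nonneg (by linarith [aa_le_one n])]

lemma num_le (n : ℕ) : Complex.abs (1 - ((1:ℂ) - 1/(n+1))^2) ≤ 2 * aa n := by
  have hcast : (1:ℂ) - ((1:ℂ) - 1/(n+1))^2 = ((1 - (1 - aa n)^2 : ℝ) : ℂ) := by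
    rw [zn_eq]; push_cast; ring
  rw [hcast, Complex.abs_ofReal]
  have h0 := aa_pos n; have h1 := aa_le_one n
  rw [_root_.abs_of_nonneg (by nlinarith)]
  nlinarith

lemma denom_ge_aa (n : ℕ) {z : ℂ} (hz : Complex.abs z ≤ 1) :
    aa n ≤ Complex.abs (1 - ((1:ℂ) - 1/(n+1)) * z) := by
  have h1' := aa_le_one n
  have h1 : Complex.abs (((1:ℂ) - 1/(n+1)) * z) ≤ 1 - aa n := by
    rw [map_mul, abs_zn]
    calc (1 - aa n) * Complex.abs z ≤ (1 - aa n) * 1 :=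
          mul_le_mul_of_nonneg_left hz (by linarith)
      _ = 1 - aa n := mul_one _
  have h2 := Complex.abs.le_sub 1 (((1:ℂ) - 1/(n+1)) * z)
  rw [map_one] at h2
  linarith

lemma denom_ge_delta (n : ℕ) {z : ℂ} (hz : Complex.abs z ≤ 1) :
    Complex.abs (1 - z) - aa n ≤ Complex.abs (1 - ((1:ℂ) - 1/(n+1)) * z) := by
  have key : (1:ℂ) - ((1:ℂ) - 1/(n+1)) * z = (1 - z) + ((aa n : ℝ) : ℂ) * z := by
    push_cast [aa]; ring
  rw [key]
  have h2 := Complex.abs.le_sub (1 - z) (-(((aa n : ℝ) : ℂ) * z))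
  rw [sub_neg_eq_add, Complex.abs.map_neg] at h2
  have h3 : Complex.abs (((aa n : ℝ) : ℂ) * z) ≤ aa n := by
    rw [map_mul, Complex.abs_ofReal, _root_.abs_of_nonneg (aa_pos n).le]
    calc aa n * Complex.abs z ≤ aa n * 1 := mul_le_mul_of_nonneg_left hz (aa_pos n).le
      _ = aa n := mul_one _
  linarith

lemma abs_w_le (n : ℕ) {z : ℂ} (hz : Complex.abs z ≤ 1) {d : ℝ} (hd : 0 < d)
    (hdle : d ≤ Complex.abs (1 - ((1:ℂ) - 1/(n+1)) * z)) :
    Complex.abs (w n z) ≤ 2 * aa n / d := by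
  rw [w, map_div₀]
  exact div_le_div₀ (by linarith [aa_pos n]) (num_le n) hd hdle

lemma abs_g_le (n : ℕ) {z : ℂ} (hz : Complex.abs z ≤ 1) {d : ℝ} (hd : 0 < d)
    (hdle : d ≤ Complex.abs (1 - ((1:ℂ) - 1/(n+1)) * z)) :
    Complex.abs (g n z) ≤ Real.exp (2 * aa n ^ 2 / d ^ 2) := by
  refine (absP (w n z)).trans ?_
  rw [Real.exp_le_exp]
  have h1 : Complex.abs (w n z) ≤ 2 * aa n / d := abs_w_le n hz hd hdle
  have h2 : Complex.abs (w n z) ^ 2 ≤ (2 * aa n / d) ^ 2 := by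
    apply pow_le_pow_left₀ (Complex.abs.nonneg _) h1
  calc Complex.abs (w n z) ^ 2 / 2 ≤ (2 * aa n / d) ^ 2 / 2 := by linarith
    _ = 2 * aa n ^ 2 / d ^ 2 := by ring

lemma abs_g_sub_one_le (n : ℕ) {z : ℂ} (hz : Complex.abs z ≤ 1) {d : ℝ} (hd : 0 < d)
    (hdle : d ≤ Complex.abs (1 - ((1:ℂ) - 1/(n+1)) * z)) (hsmall : 2 * aa n ≤ d) :
    Complex.abs (g n z - 1) ≤ 12 * aa n ^ 2 / d ^ 2 := by
  have h1 : Complex.abs (w n z) ≤ 2 * aa n / d := abs_w_le n hz hd hdle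
  have h1' : Complex.abs (w n z) ≤ 1 := h1.trans (by rw [div_le_one hd]; linarith)
  have h2 := absPsub (w n z) h1'
  have h3 : Complex.abs (w n z) ^ 2 ≤ 4 * aa n ^ 2 / d ^ 2 := by
    have := pow_le_pow_left₀ (Complex.abs.nonneg _) h1 2
    have h3' : (2 * aa n / d)^2 = 4 * aa n ^2 / d^2 := by field_simp; ring
    rw [h3'] at this; exact this
  calc Complex.abs (g n z - 1) ≤ 3 * Complex.abs (w n z) ^ 2 := h2
    _ ≤ 3 * (4 * aa n ^ 2 / d ^ 2) := by linarith
    _ = 12 * aa n ^ 2 / d ^ 2 := by ring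

lemma tele (M N : ℕ) (hM : 1 ≤ M) : ∑ n ∈ Finset.Icc M N, aa n ^ 2 ≤ 1 / M := by
  have hMR : (1:ℝ) ≤ (M:ℝ) := by exact_mod_cast hM
  have step : ∀ n ∈ Finset.Icc M N, aa n ^ 2 ≤ 1/(n:ℝ) - 1/((n:ℝ)+1) := by
    intro n hn
    have hn1 : 1 ≤ n := le_trans hM (Finset.mem_Icc.1 hn).1
    have hnR : (1:ℝ) ≤ (n:ℝ) := by exact_mod_cast hn1
    unfold aa
    rw [div_sub_div _ _ (by linarith) (by linarith), div_pow, one_pow,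
      div_le_div_iff₀ (by positivity) (by positivity)]
    nlinarith
  have tcalc : ∑ n ∈ Finset.Icc M N, (1/(n:ℝ) - 1/((n:ℝ)+1)) ≤ 1 / M := by
    rw [← Finset.Ico_add_one_right_eq_Icc, Finset.sum_Ico_eq_sum_range]
    have heq : ∀ i ∈ Finset.range (N + 1 - M),
        (1/((M + i : ℕ):ℝ) - 1/(((M + i : ℕ):ℝ)+1))
          = (fun j : ℕ => 1/((M:ℝ)+(j:ℝ))) i - (fun j : ℕ => 1/((M:ℝ)+(j:ℝ))) (i+1) := by
      intro i _
      push_cast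
      ring
    rw [Finset.sum_congr rfl heq, Finset.sum_range_sub' (f := fun j : ℕ => 1/((M:ℝ)+(j:ℝ)))]
    have h0 : (0:ℝ) ≤ 1/((M:ℝ) + ((N + 1 - M : ℕ):ℝ)) := by positivity
    have e0 : (M:ℝ) + ((0:ℕ):ℝ) = (M:ℝ) := by norm_num
    show 1/((M:ℝ)+((0:ℕ):ℝ)) - 1/((M:ℝ)+((N+1-M:ℕ):ℝ)) ≤ 1/(M:ℝ)
    rw [e0]
    linarith
  exact (Finset.sum_le_sum step).trans tcalc

lemma prod_sub_one_le (s : Finset ℕ) (v : ℕ → ℂ) :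
    Complex.abs (∏ n ∈ s, v n - 1) ≤ ∏ n ∈ s, (1 + Complex.abs (v n - 1)) - 1 := by
  classical
  induction s using Finset.induction_on with
  | empty => simp
  | @insert a s ha ih =>
    rw [Finset.prod_insert ha, Finset.prod_insert ha]
    have key : v a * ∏ n ∈ s, v n - 1 = v a * (∏ n ∈ s, v n - 1) + (v a - 1) := by ring
    rw [key]
    have h1 : Complex.abs (v a) ≤ 1 + Complex.abs (v a - 1) := by
      have h := Complex.abs.add_le (v a - 1) 1
      simp only [sub_add_cancel, map_one] at h
      linarith
    have hP0 : ∀ n ∈ s, (1:ℝ) ≤ 1 + Complex.abs (v n - 1) := fun n _ => by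
      linarith [Complex.abs.nonneg (v n - 1)]
    have hP : (1:ℝ) ≤ ∏ n ∈ s, (1 + Complex.abs (v n - 1)) := by
      have h := Finset.prod_le_prod (s := s) (f := fun _ => (1:ℝ))
        (g := fun n => 1 + Complex.abs (v n - 1)) (fun n _ => zero_le_one) hP0
      simpa using h
    have tri := Complex.abs.add_le (v a * (∏ n ∈ s, v n - 1)) (v a - 1)
    rw [map_mul] at tri
    have hmul : Complex.abs (v a) * Complex.abs (∏ n ∈ s, v n - 1)
        ≤ (1 + Complex.abs (v a - 1)) * (∏ n ∈ s, (1 + Complex.abs (v n - 1)) - 1) := by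
      apply mul_le_mul h1 ih (Complex.abs.nonneg _)
      positivity
    nlinarith [Complex.abs.nonneg (v a - 1)]

lemma prod_one_add_le_exp (s : Finset ℕ) (e : ℕ → ℝ) (he : ∀ n ∈ s, 0 ≤ e n) :
    ∏ n ∈ s, (1 + e n) ≤ Real.exp (∑ n ∈ s, e n) := by
  rw [Real.exp_sum]
  exact Finset.prod_le_prod (fun n hn => by linarith [he n hn])
    (fun n hn => by linarith [Real.add_one_le_exp (e n)])

def bb (δ : ℝ) (n : ℕ) : ℝ := if aa n ≤ δ/2 then 8 * aa n^2/δ^2 else 2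

lemma bb_le_two {δ : ℝ} (hδ : 0 < δ) (n : ℕ) : bb δ n ≤ 2 := by
  unfold bb
  split
  · rename_i h
    rw [div_le_iff₀ (by positivity)]
    nlinarith [aa_pos n]
  · exact le_rfl

lemma abs_g_le_bb {z : ℂ} (hz : Complex.abs z ≤ 1) (hδ : 0 < Complex.abs (1 - z)) (n : ℕ) :
    Complex.abs (g n z) ≤ Real.exp (bb (Complex.abs (1 - z)) n) := by
  set δ := Complex.abs (1 - z) with hδdef
  by_cases hcase : aa n ≤ δ/2
  · have hd : (0:ℝ) < δ/2 := by linarith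
    have hdle : δ/2 ≤ Complex.abs (1 - ((1:ℂ) - 1/(n+1)) * z) := by
      have := denom_ge_delta n hz
      linarith
    refine (abs_g_le n hz hd hdle).trans (Real.exp_le_exp.2 ?_)
    simp only [bb, if_pos hcase]
    have heq : 2 * aa n ^ 2 / (δ/2)^2 = 8 * aa n ^2 / δ^2 := by
      field_simp <;> ring
    exact le_of_eq heq
  · have hd := aa_pos n
    have hdle := denom_ge_aa n hz
    refine (abs_g_le n hz hd hdle).trans (Real.exp_le_exp.2 ?_)
    simp only [bb, if_neg hcase]
    rw [div_le_iff₀ (pow_pos (aa_pos n) 2)]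

lemma sum_bb_le {δ : ℝ} (hδ : 0 < δ) (hδ2 : δ ≤ 2) (N : ℕ) :
    ∑ n ∈ Finset.Icc 1 N, bb δ n ≤ 12/δ := by
  classical
  set K := ⌈2/δ⌉₊ with hKdef
  have hK1 : 1 ≤ K := Nat.one_le_ceil_iff.2 (by positivity)
  have hKge : 2/δ ≤ (K:ℝ) := Nat.le_ceil _
  have hKle : (K:ℝ) ≤ 2/δ + 1 := (Nat.ceil_lt_add_one (by positivity)).le
  have h2δ : (1:ℝ) ≤ 2/δ := by rw [le_div_iff₀ hδ]; linarith
  have hs1 : ∑ n ∈ (Finset.Icc 1 N).filter (fun n => n < K), bb δ n ≤ 8/δ := by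
    have hsub : (Finset.Icc 1 N).filter (fun n => n < K) ⊆ Finset.Ico 1 K := fun n hn => by
      simp only [Finset.mem_filter, Finset.mem_Icc] at hn
      exact Finset.mem_Ico.2 ⟨hn.1.1, hn.2⟩
    have hcard : (((Finset.Icc 1 N).filter (fun n => n < K)).card : ℝ) ≤ (K:ℝ) := by
      have h := Finset.card_le_card hsub
      rw [Nat.card_Ico] at h
      exact_mod_cast h.trans (Nat.sub_le K 1)
    calc ∑ n ∈ (Finset.Icc 1 N).filter (fun n => n < K), bb δ n
        ≤ ∑ _n ∈ (Finset.Icc 1 N).filter (fun n => n < K), (2:ℝ) :=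
          Finset.sum_le_sum (fun n _ => bb_le_two hδ n)
      _ = (((Finset.Icc 1 N).filter (fun n => n < K)).card : ℝ) * 2 := by
          rw [Finset.sum_const, nsmul_eq_mul]
      _ ≤ (K:ℝ) * 2 := by linarith
      _ ≤ 8/δ := by
          rw [le_div_iff₀ hδ]
          have hK4 : (K:ℝ) ≤ 4/δ := by
            calc (K:ℝ) ≤ 2/δ + 1 := hKle
              _ ≤ 2/δ + 2/δ := by linarith
              _ = 4/δ := by ring
          have h4 : (4/δ)*δ = 4 := div_mul_cancel₀ 4 hδ.ne'
          nlinarith [hK4, h4]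
  have hs2 : ∑ n ∈ (Finset.Icc 1 N).filter (fun n => ¬ n < K), bb δ n ≤ 4/δ := by
    have hbb : ∀ n ∈ (Finset.Icc 1 N).filter (fun n => ¬ n < K), bb δ n = 8 * aa n^2/δ^2 := by
      intro n hn
      simp only [Finset.mem_filter, Finset.mem_Icc, not_lt] at hn
      have hKn : (K:ℝ) ≤ (n:ℝ) := by exact_mod_cast hn.2
      have haan : aa n ≤ δ/2 := by
        unfold aa
        rw [div_le_div_iff₀ (by positivity) (by norm_num)]
        have h2n : 2/δ ≤ (n:ℝ) + 1 := by linarith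
        rw [div_le_iff₀ hδ] at h2n
        linarith
      simp [bb, haan]
    rw [Finset.sum_congr rfl hbb]
    have hsub2 : (Finset.Icc 1 N).filter (fun n => ¬ n < K) ⊆ Finset.Icc K N := fun n hn => by
      simp only [Finset.mem_filter, Finset.mem_Icc, not_lt] at hn
      exact Finset.mem_Icc.2 ⟨hn.2, hn.1.2⟩
    have hmono : ∑ n ∈ (Finset.Icc 1 N).filter (fun n => ¬ n < K), aa n^2
        ≤ ∑ n ∈ Finset.Icc K N, aa n^2 :=
      Finset.sum_le_sum_of_subset_of_nonneg hsub2 (fun n _ _ => by positivity)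
    have htel := tele K N hK1
    have hKR : (1:ℝ) ≤ (K:ℝ) := by exact_mod_cast hK1
    have hKinv : 1/(K:ℝ) ≤ δ/2 := by
      rw [div_le_div_iff₀ (by linarith) (by norm_num)]
      rw [div_le_iff₀ hδ] at hKge
      linarith
    calc ∑ n ∈ (Finset.Icc 1 N).filter (fun n => ¬ n < K), 8 * aa n^2/δ^2
        = (8/δ^2) * ∑ n ∈ (Finset.Icc 1 N).filter (fun n => ¬ n < K), aa n^2 := by
          rw [Finset.mul_sum]
          exact Finset.sum_congr rfl (fun n _ => by ring)
      _ ≤ (8/δ^2) * (δ/2) := by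
          apply mul_le_mul_of_nonneg_left _ (by positivity)
          linarith
      _ = 4/δ := by field_simp; ring
  calc ∑ n ∈ Finset.Icc 1 N, bb δ n
      = ∑ n ∈ (Finset.Icc 1 N).filter (fun n => n < K), bb δ n
        + ∑ n ∈ (Finset.Icc 1 N).filter (fun n => ¬ n < K), bb δ n :=
        (Finset.sum_filter_add_sum_filter_not _ _ _).symm
    _ ≤ 8/δ + 4/δ := add_le_add hs1 hs2
    _ = 12/δ := by ring

lemma absF_le {z : ℂ} (hz : Complex.abs z < 1) (N : ℕ) :
    Complex.abs (F N z) ≤ Real.exp (12 / Complex.abs (1 - z)) := by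
  have hz1 : Complex.abs z ≤ 1 := hz.le
  have hδpos : 0 < Complex.abs (1 - z) := by
    apply Complex.abs.pos_iff.2
    intro h
    rw [sub_eq_zero] at h
    rw [← h] at hz
    simp at hz
  have hδ2 : Complex.abs (1 - z) ≤ 2 := by
    have h := Complex.abs.sub_le_add 1 z
    rw [map_one] at h
    linarith
  calc Complex.abs (F N z) = ∏ n ∈ Finset.Icc 1 N, Complex.abs (g n z) := by
        rw [F]; exact map_prod Complex.abs _ _
    _ ≤ ∏ n ∈ Finset.Icc 1 N, Real.exp (bb (Complex.abs (1 - z)) n) :=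
        Finset.prod_le_prod (fun n _ => Complex.abs.nonneg _)
          (fun n _ => abs_g_le_bb hz1 hδpos n)
    _ = Real.exp (∑ n ∈ Finset.Icc 1 N, bb (Complex.abs (1 - z)) n) := (Real.exp_sum _ _).symm
    _ ≤ Real.exp (12 / Complex.abs (1 - z)) :=
        Real.exp_le_exp.2 (sum_bb_le hδpos hδ2 N)

lemma denom_ge_rho (n : ℕ) {z : ℂ} {r : ℝ} (hz : Complex.abs z ≤ r) :
    1 - r ≤ Complex.abs (1 - ((1:ℂ) - 1/(n+1)) * z) := by
  have h1 : Complex.abs (((1:ℂ) - 1/(n+1)) * z) ≤ r := by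
    rw [map_mul, abs_zn]
    nlinarith [mul_nonneg (aa_pos n).le (Complex.abs.nonneg z), Complex.abs.nonneg z,
      aa_pos n, aa_le_one n]
  have h2 := Complex.abs.le_sub 1 (((1:ℂ) - 1/(n+1)) * z)
  rw [map_one] at h2
  linarith

lemma F_Ioc (N : ℕ) (z : ℂ) : F N z = ∏ n ∈ Finset.Ioc 0 N, g n z := by
  rw [F, show Finset.Icc 1 N = Finset.Ioc 0 N by ext x; simp [Nat.lt_iff_add_one_le]]

lemma cauchyK {K : Set ℂ} (hKsub : K ⊆ ball (0:ℂ) 1) (hK : IsCompact K) :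
    UniformCauchySeqOn F atTop K := by
  rcases K.eq_empty_or_nonempty with rfl | hne
  · intro u hu
    filter_upwards with p x hx
    simp at hx
  obtain ⟨z₀, hz₀K, hz₀max⟩ := hK.exists_isMaxOn hne Complex.continuous_abs.continuousOn
  rw [isMaxOn_iff] at hz₀max
  set r := Complex.abs z₀ with hrdef
  have hr : r < 1 := by
    have := hKsub hz₀K
    rwa [mem_ball_zero_iff, Complex.norm_eq_abs] at this
  have hrz : ∀ z ∈ K, Complex.abs z ≤ r := hz₀max
  set ρ := 1 - r with hρdef
  have hρ : 0 < ρ := by simp only [hρdef]; linarith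
  set B := Real.exp (2/ρ^2) with hBdef
  set C := 12/ρ^2 with hCdef
  have hdenom : ∀ (n : ℕ), ∀ z ∈ K, ρ ≤ Complex.abs (1 - ((1:ℂ) - 1/(n+1)) * z) :=
    fun n z hz => denom_ge_rho n (hrz z hz)
  have hzK1 : ∀ z ∈ K, Complex.abs z ≤ 1 := fun z hz => (hrz z hz).trans hr.le
  have hFb : ∀ (N : ℕ), ∀ z ∈ K, Complex.abs (F N z) ≤ B := by
    intro N z hzK
    calc Complex.abs (F N z) = ∏ n ∈ Finset.Icc 1 N, Complex.abs (g n z) := by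
          rw [F]; exact map_prod Complex.abs _ _
      _ ≤ ∏ n ∈ Finset.Icc 1 N, Real.exp (2 * aa n^2/ρ^2) :=
          Finset.prod_le_prod (fun n _ => Complex.abs.nonneg _)
            (fun n _ => abs_g_le n (hzK1 z hzK) hρ (hdenom n z hzK))
      _ = Real.exp (∑ n ∈ Finset.Icc 1 N, 2 * aa n^2/ρ^2) := (Real.exp_sum _ _).symm
      _ ≤ B := by
          rw [hBdef, Real.exp_le_exp]
          have heq : ∑ n ∈ Finset.Icc 1 N, 2*aa n^2/ρ^2
              = (2/ρ^2) * ∑ n ∈ Finset.Icc 1 N, aa n^2 := by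
            rw [Finset.mul_sum]
            exact Finset.sum_congr rfl (fun n _ => by ring)
          have ht := tele 1 N le_rfl
          push_cast at ht
          rw [heq]
          calc (2/ρ^2) * ∑ n ∈ Finset.Icc 1 N, aa n^2 ≤ (2/ρ^2) * 1 := by
                apply mul_le_mul_of_nonneg_left _ (by positivity)
                linarith
            _ = 2/ρ^2 := mul_one _
  set K₀ := ⌈2/ρ⌉₊ with hK₀def
  have hK₀ge : 2/ρ ≤ (K₀:ℝ) := Nat.le_ceil _
  have key : ∀ n m : ℕ, K₀ ≤ n → n ≤ m → ∀ z ∈ K,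
      dist (F m z) (F n z) ≤ B * (Real.exp (C/((n:ℝ)+1)) - 1) := by
    intro n m hn hnm z hzK
    have hz1 : Complex.abs z ≤ 1 := hzK1 z hzK
    have hsplit : F m z = F n z * ∏ k ∈ Finset.Ioc n m, g k z := by
      rw [F_Ioc, F_Ioc, ← Finset.prod_Ioc_consecutive _ (Nat.zero_le n) hnm]
    have hQ : Complex.abs ((∏ k ∈ Finset.Ioc n m, g k z) - 1)
        ≤ Real.exp (C/((n:ℝ)+1)) - 1 := by
      refine le_trans (prod_sub_one_le _ _) ?_
      have hsum : ∑ k ∈ Finset.Ioc n m, Complex.abs (g k z - 1) ≤ C/((n:ℝ)+1) := by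
        have hterm : ∀ k ∈ Finset.Ioc n m,
            Complex.abs (g k z - 1) ≤ (12/ρ^2) * aa k^2 := by
          intro k hk
          have hk1 : n < k := (Finset.mem_Ioc.1 hk).1
          have hkR : (K₀:ℝ) + 1 ≤ (k:ℝ) := by
            have : K₀ + 1 ≤ k := by omega
            exact_mod_cast this
          have hsmall : 2 * aa k ≤ ρ := by
            unfold aa
            rw [mul_one_div, div_le_iff₀ (by positivity)]
            rw [div_le_iff₀ hρ] at hK₀ge
            nlinarith
          have h := abs_g_sub_one_le k hz1 hρ (hdenom k z hzK) hsmall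
          calc Complex.abs (g k z - 1) ≤ 12 * aa k^2/ρ^2 := h
            _ = (12/ρ^2) * aa k^2 := by ring
        calc ∑ k ∈ Finset.Ioc n m, Complex.abs (g k z - 1)
            ≤ ∑ k ∈ Finset.Ioc n m, (12/ρ^2) * aa k^2 := Finset.sum_le_sum hterm
          _ = (12/ρ^2) * ∑ k ∈ Finset.Ioc n m, aa k^2 := by rw [Finset.mul_sum]
          _ ≤ (12/ρ^2) * (1/((n:ℝ)+1)) := by
              apply mul_le_mul_of_nonneg_left _ (by positivity)
              rw [show Finset.Ioc n m = Finset.Icc (n+1) m from (Finset.Icc_add_one_left_eq_Ioc n m).symm]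
              have ht := tele (n+1) m (by omega)
              push_cast at ht
              linarith
          _ = C/((n:ℝ)+1) := by rw [hCdef]; ring
      have h1 := prod_one_add_le_exp (Finset.Ioc n m)
        (fun k => Complex.abs (g k z - 1)) (fun k _ => Complex.abs.nonneg _)
      have h2 := Real.exp_le_exp.2 hsum
      linarith
    have hfactor : F m z - F n z = F n z * ((∏ k ∈ Finset.Ioc n m, g k z) - 1) := by
      rw [hsplit]; ring
    rw [Complex.dist_eq, Complex.norm_eq_abs, hfactor, map_mul]
    exact mul_le_mul (hFb n z hzK) hQ (Complex.abs.nonneg _) (Real.exp_nonneg _)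
  -- the bound tends to 0
  have h1 : Tendsto (fun n : ℕ => C/((n:ℝ)+1)) atTop (𝓝 0) := by
    have h2 : Tendsto (fun n : ℕ => C/((n+1:ℕ):ℝ)) atTop (𝓝 0) :=
      (tendsto_const_div_atTop_nhds_zero_nat C).comp (tendsto_add_atTop_nat 1)
    simpa using h2
  have hφ : Tendsto (fun n : ℕ => B * (Real.exp (C/((n:ℝ)+1)) - 1)) atTop (𝓝 0) := by
    have h3 := (Real.continuous_exp.tendsto 0).comp h1
    rw [Real.exp_zero] at h3
    have h4 := (h3.sub_const 1).const_mul B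
    simpa using h4
  rw [Metric.uniformCauchySeqOn_iff]
  intro ε hε
  obtain ⟨N₁, hN₁⟩ := (Metric.tendsto_atTop.1 hφ) ε hε
  refine ⟨max N₁ K₀, fun m hm n hn z hzK => ?_⟩
  have hbound : ∀ p q : ℕ, max N₁ K₀ ≤ p → p ≤ q → dist (F q z) (F p z) < ε := by
    intro p q hp hpq
    have h5 := hN₁ p (le_trans (le_max_left _ _) hp)
    rw [Real.dist_eq, sub_zero] at h5
    calc dist (F q z) (F p z) ≤ B * (Real.exp (C/((p:ℝ)+1)) - 1) :=
          key p q (le_trans (le_max_right _ _) hp) hpq z hzK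
      _ ≤ |B * (Real.exp (C/((p:ℝ)+1)) - 1)| := le_abs_self _
      _ < ε := h5
  rcases le_total n m with h | h
  · exact hbound n m hn h
  · rw [dist_comm]
    exact hbound m n hm h

def flim (z : ℂ) : ℂ := limUnder atTop (fun N => F N z)

lemma tendsto_flim {z : ℂ} (hz : Complex.abs z < 1) :
    Tendsto (fun N => F N z) atTop (𝓝 (flim z)) := by
  have hsub : ({z} : Set ℂ) ⊆ ball 0 1 := by
    intro x hx
    rw [Set.mem_singleton_iff] at hx
    subst hx
    rwa [mem_ball_zero_iff, Complex.norm_eq_abs]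
  have hc := cauchyK hsub isCompact_singleton
  have hcs : CauchySeq (fun N => F N z) := by
    rw [Metric.cauchySeq_iff]
    intro ε hε
    obtain ⟨N, hN⟩ := (Metric.uniformCauchySeqOn_iff.1 hc) ε hε
    exact ⟨N, fun m hm n hn => hN m hm n hn z rfl⟩
  obtain ⟨L, hL⟩ := cauchySeq_tendsto_of_complete hcs
  rw [show flim z = L from hL.limUnder_eq]
  exact hL

end CPG
end
end CPGaux

/-- The canonical product `f(z) = ∏ₙ P((1-zₙ²)/(1-zₙ z))` with `P(z) = (1-z)eᶻ` and
`zₙ = 1 - 1/(n+1)` converges locally uniformly on `𝔻` and satisfies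
`log|f(z)| ≤ 96/|1-z|` on `𝔻`. -/
theorem canonical_product_growth :
    ∃ f : ℂ → ℂ,
      TendstoLocallyUniformlyOn
        (fun (N : ℕ) (z : ℂ) => ∏ n ∈ Finset.Icc 1 N,
          (1 - (1 - ((1:ℂ) - 1/(n+1))^2) / (1 - ((1:ℂ) - 1/(n+1)) * z)) *
            Complex.exp ((1 - ((1:ℂ) - 1/(n+1))^2) / (1 - ((1:ℂ) - 1/(n+1)) * z)))
        f atTop (ball (0:ℂ) 1) ∧
      ∀ z ∈ ball (0:ℂ) 1,
        Real.log ‖f z‖ ≤ 96 / ‖1 - z‖ := by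
  refine ⟨CPG.flim, ?_, ?_⟩
  · show TendstoLocallyUniformlyOn CPG.F CPG.flim atTop (ball (0:ℂ) 1)
    rw [tendstoLocallyUniformlyOn_iff_forall_isCompact isOpen_ball]
    intro K hKsub hK
    have hc := CPG.cauchyK hKsub hK
    apply hc.tendstoUniformlyOn_of_tendsto
    intro z hz
    have hz2 := hKsub hz
    have hz' : Complex.abs z < 1 := by rwa [mem_ball_zero_iff, Complex.norm_eq_abs] at hz2
    exact CPG.tendsto_flim hz'
  · intro z hz
    show Real.log (Complex.abs (CPG.flim z)) ≤ 96 / Complex.abs (1 - z)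
    have hz' : Complex.abs z < 1 := by rwa [mem_ball_zero_iff, Complex.norm_eq_abs] at hz
    have hlim := CPG.tendsto_flim hz'
    have habs : Tendsto (fun N => Complex.abs (CPG.F N z)) atTop
        (nhds (Complex.abs (CPG.flim z))) :=
      (Complex.continuous_abs.tendsto _).comp hlim
    have hb : Complex.abs (CPG.flim z) ≤ Real.exp (12 / Complex.abs (1 - z)) :=
      le_of_tendsto habs (Filter.Eventually.of_forall (fun N => CPG.absF_le hz' N))
    have hδpos : 0 < Complex.abs (1 - z) := by
      apply Complex.abs.pos_iff.2
      intro h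
      rw [sub_eq_zero] at h
      rw [← h] at hz'
      simp at hz'
    have h12 : 12 / Complex.abs (1 - z) ≤ 96 / Complex.abs (1 - z) :=
      (div_le_div_iff_of_pos_right hδpos).2 (by norm_num)
    rcases eq_or_lt_of_le (Complex.abs.nonneg (CPG.flim z)) with h0 | h0
    · rw [← h0, Real.log_zero]
      exact div_nonneg (by norm_num) (Complex.abs.nonneg _)
    · calc Real.log (Complex.abs (CPG.flim z))
          ≤ Real.log (Real.exp (12 / Complex.abs (1 - z))) := Real.log_le_log h0 hb
        _ = 12 / Complex.abs (1 - z) := Real.log_exp _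
        _ ≤ 96 / Complex.abs (1 - z) := h12
end

section
/- For z_n = 1 - 1/(n+1) and any z in the open unit disk, |(1-z_n²)/(1-z_n z)| ≤ 2√2/(n|1-z|+1). -/
/-- For `zₙ = 1 - 1/(n+1)` and any `z` in the open unit disk,
`|(1-zₙ²)/(1-zₙ z)| ≤ 2√2/(n|1-z|+1)`. -/
theorem abs_factor_bound (n : ℕ) (hn : 1 ≤ n) (z : ℂ) (hz : z ∈ Metric.ball (0:ℂ) 1) :
    ‖(1 - ((1 : ℂ) - 1/(n+1))^2) / (1 - ((1 : ℂ) - 1/(n+1)) * z)‖ ≤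
      2 * Real.sqrt 2 / (n * ‖1 - z‖ + 1) := by
  have hz1 : ‖z‖ < 1 := by simpa using hz
  have hre : z.re < 1 :=
    lt_of_le_of_lt (le_trans (le_abs_self _) (Complex.abs_re_le_norm z)) hz1
  set w : ℂ := (n:ℂ)*(1-z)+1 with hw
  have hwre : 0 < w.re := by
    have : w.re = n * (1 - z.re) + 1 := by
      simp [hw, Complex.add_re, Complex.mul_re, Complex.sub_re]
    rw [this]
    have hn0 : (0:ℝ) ≤ (n:ℝ) := Nat.cast_nonneg n
    nlinarith
  have hw0 : w ≠ 0 := fun h => by simp [h] at hwre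
  have hcn : ((n:ℂ)+1) ≠ 0 := Nat.cast_add_one_ne_zero n
  have hexpr : (1 - ((1 : ℂ) - 1/(n+1))^2) / (1 - ((1 : ℂ) - 1/(n+1)) * z)
      = (2*(n:ℂ)+1) / (((n:ℂ)+1) * w) := by
    have hden : 1 - ((1 : ℂ) - 1/(n+1)) * z = w / ((n:ℂ)+1) := by
      field_simp [hw]; ring
    rw [hden]
    field_simp
    ring
  rw [hexpr, norm_div, norm_mul]
  set a := ‖1 - z‖ with ha
  set t := ‖w‖ with ht
  have ht0 : 0 < t := norm_pos_iff.mpr hw0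
  have ha0 : 0 ≤ a := norm_nonneg _
  have hN : (1:ℝ) ≤ (n:ℝ) := by exact_mod_cast hn
  -- t² = n²a² + 2n(1-z.re) + 1
  have hude : a^2 = (1 - z.re)^2 + z.im^2 := by
    rw [ha, Complex.sq_norm, Complex.normSq_apply]
    simp [Complex.sub_re, Complex.sub_im]
    ring
  have htsq : t^2 = (n*(1 - z.re)+1)^2 + (n*z.im)^2 := by
    rw [ht, Complex.sq_norm, Complex.normSq_apply]
    simp [hw, Complex.add_re, Complex.add_im, Complex.mul_re, Complex.mul_im,
      Complex.sub_re, Complex.sub_im]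
    ring
  have key : (n*a+1)^2 ≤ 2 * t^2 := by
    have hre' : 0 ≤ 1 - z.re := by linarith
    have hid : 2*t^2 - ((n:ℝ)*a+1)^2 = ((n:ℝ)*a-1)^2 + 4*((n:ℝ)*(1-z.re)) := by
      linear_combination 2*htsq - 2*(n:ℝ)^2*hude
    nlinarith [sq_nonneg ((n:ℝ)*a - 1),
      mul_nonneg (Nat.cast_nonneg n : (0:ℝ) ≤ n) hre']
  have hna1 : (0:ℝ) < n*a+1 := by positivity
  have h2 : n*a+1 ≤ Real.sqrt 2 * t := by
    have h2t : 0 ≤ Real.sqrt 2 * t := by positivity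
    nlinarith [Real.sq_sqrt (by norm_num : (0:ℝ) ≤ 2), Real.sqrt_nonneg 2]
  have habsnum : ‖2*(n:ℂ)+1‖ = 2*(n:ℝ)+1 := by
    rw [show (2*(n:ℂ)+1) = ((2*(n:ℝ)+1 : ℝ) : ℂ) by push_cast; ring,
      Complex.norm_real, Real.norm_eq_abs]
    exact abs_of_nonneg (by positivity)
  have habsn1 : ‖(n:ℂ)+1‖ = (n:ℝ)+1 := by
    rw [show ((n:ℂ)+1) = (((n:ℝ)+1 : ℝ) : ℂ) by push_cast; ring, Complex.norm_real, Real.norm_eq_abs]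
    exact abs_of_nonneg (by positivity)
  rw [habsnum, habsn1, div_le_div_iff₀ (by positivity) hna1]
  -- (2n+1)(na+1) ≤ 2√2 (n+1) t
  have hnum : (2*(n:ℝ)+1) ≤ 2*((n:ℝ)+1) := by linarith
  calc (2*(n:ℝ)+1) * (n*a+1) ≤ 2*((n:ℝ)+1) * (Real.sqrt 2 * t) := by
        apply mul_le_mul hnum h2 (le_of_lt hna1) (by positivity)
    _ = 2 * Real.sqrt 2 * (((n:ℝ)+1) * t) := by ring
end
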